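/- For every N ∈ ℕ and every τ > 0, there exist constants a = a(τ) ≥ 0 and b = b(N,τ) ≥ 0 such that G_N(τ·c) ≤ a·G_N(c) + b for all c ≥ 0. One may take a = 2τ. -/
import Mathlib


/-- Tower of exponentials: `e_[0] = 1`, `e_[N] = exp (e_[N-1])`. -/
noncomputable def towerE : ℕ → ℝ
  | 0 => 1
  | n + 1 => Real.exp (towerE n)

/-- `N`-fold iterated logarithm. -/
noncomputable def iterLog (N : ℕ) (t : ℝ) : ℝ := Real.log^[N] t

/-- `G_N(t) = 0` for `t ≤ e_[N-1]` and `G_N(t) = t · log_[N](t)` for `t > e_[N-1]`. -/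
noncomputable def G (N : ℕ) (t : ℝ) : ℝ :=
  if t ≤ towerE (N - 1) then 0 else t * iterLog N t

lemma towerE_pos (n : ℕ) : 0 < towerE n := by
  cases n with
  | zero => norm_num [towerE]
  | succ m => exact Real.exp_pos _

lemma one_le_towerE (n : ℕ) : 1 ≤ towerE n := by
  induction n with
  | zero => simp [towerE]
  | succ m ih => exact Real.one_le_exp (by linarith)

lemma towerE_lt_succ (n : ℕ) : towerE n < towerE (n + 1) := by
  have h := Real.add_one_le_exp (towerE n)
  show towerE n < Real.exp (towerE n)
  linarith

lemma towerE_mono : Monotone towerE :=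
  monotone_nat_of_le_succ fun n => (towerE_lt_succ n).le

lemma iterLog_succ (N : ℕ) (t : ℝ) : iterLog (N + 1) t = iterLog N (Real.log t) := by
  simp [iterLog, Function.iterate_succ_apply]

lemma le_log_of_towerE {n : ℕ} {t : ℝ} (h : towerE (n + 1) ≤ t) : towerE n ≤ Real.log t := by
  have ht : 0 < t := lt_of_lt_of_le (towerE_pos _) h
  rw [Real.le_log_iff_exp_le ht]
  exact h

lemma iterLog_mono (N : ℕ) : ∀ {s t : ℝ}, towerE N ≤ s → s ≤ t →
    iterLog (N + 1) s ≤ iterLog (N + 1) t := by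
  induction N with
  | zero =>
    intro s t hs hst
    simp only [iterLog, Function.iterate_one]
    exact Real.log_le_log (lt_of_lt_of_le one_pos hs) hst
  | succ M ih =>
    intro s t hs hst
    rw [iterLog_succ, iterLog_succ]
    have hs0 : 0 < s := lt_of_lt_of_le (towerE_pos _) hs
    exact ih (le_log_of_towerE hs) (Real.log_le_log hs0 hst)

lemma iterLog_nonneg (N : ℕ) : ∀ {t : ℝ}, towerE N ≤ t → 0 ≤ iterLog (N + 1) t := by
  induction N with
  | zero =>
    intro t ht
    simpa [iterLog] using Real.log_nonneg ht
  | succ M ih =>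
    intro t ht
    rw [iterLog_succ]
    exact ih (le_log_of_towerE ht)

lemma iterLog_sq_le (N : ℕ) : ∀ {t : ℝ}, towerE (N + 1) ≤ t →
    iterLog (N + 1) (t ^ 2) ≤ 2 * iterLog (N + 1) t := by
  induction N with
  | zero =>
    intro t ht
    have ht0 : 0 < t := lt_of_lt_of_le (towerE_pos _) ht
    simp [iterLog, Real.log_pow]
  | succ M ih =>
    intro t ht
    have ht0 : 0 < t := lt_of_lt_of_le (towerE_pos _) ht
    have hlog : towerE (M + 1) ≤ Real.log t := le_log_of_towerE ht
    have h2 : (2 : ℝ) ≤ Real.log t := by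
      have := Real.add_one_le_exp (towerE M)
      have h1 : 1 ≤ towerE M := one_le_towerE M
      have : (2 : ℝ) ≤ towerE (M + 1) := by
        show (2 : ℝ) ≤ Real.exp (towerE M); linarith
      linarith
    rw [iterLog_succ (M + 1) (t ^ 2), iterLog_succ (M + 1) t, Real.log_pow]
    push_cast
    have hA : iterLog (M + 1) (2 * Real.log t) ≤ iterLog (M + 1) ((Real.log t) ^ 2) := by
      apply iterLog_mono M
      · have : towerE M ≤ towerE (M + 1) := (towerE_lt_succ M).le
        linarith
      · nlinarith
    have hB : iterLog (M + 1) ((Real.log t) ^ 2) ≤ 2 * iterLog (M + 1) (Real.log t) := ih hlog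
    linarith

lemma G_eq (M : ℕ) (t : ℝ) :
    G (M + 1) t = if t ≤ towerE M then 0 else t * iterLog (M + 1) t := by
  simp [G]

lemma G_nonneg (M : ℕ) (c : ℝ) : 0 ≤ G (M + 1) c := by
  rw [G_eq]
  split
  · exact le_refl 0
  · rename_i h
    push_neg at h
    have hc0 : 0 < c := lt_of_lt_of_le (towerE_pos _) h.le
    exact mul_nonneg hc0.le (iterLog_nonneg M h.le)

theorem G_scaling (N : ℕ) (hN : 1 ≤ N) (τ : ℝ) (hτ : 0 < τ) :
    ∃ a ≥ (0 : ℝ), ∃ b ≥ (0 : ℝ), a = 2 * τ ∧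
      ∀ c : ℝ, 0 ≤ c → G N (τ * c) ≤ a * G N c + b := by
  obtain ⟨M, rfl⟩ : ∃ M, N = M + 1 := ⟨N - 1, (Nat.succ_pred_eq_of_pos hN).symm⟩
  set C : ℝ := max τ (towerE (M + 1)) with hCdef
  set T : ℝ := max (τ * C) (towerE (M + 1)) with hTdef
  have hTE : towerE (M + 1) ≤ T := le_max_right _ _
  have hTM : towerE M ≤ T := le_trans (towerE_lt_succ M).le hTE
  have hT0 : 0 < T := lt_of_lt_of_le (towerE_pos _) hTE
  have hiT : 0 ≤ iterLog (M + 1) T := iterLog_nonneg M hTM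
  have hb : 0 ≤ T * iterLog (M + 1) T := mul_nonneg hT0.le hiT
  refine ⟨2 * τ, by positivity, T * iterLog (M + 1) T, hb, rfl, ?_⟩
  intro c hc
  have hGc : 0 ≤ G (M + 1) c := G_nonneg M c
  have hterm : 0 ≤ 2 * τ * G (M + 1) c := by positivity
  rcases le_or_gt (τ * c) (towerE M) with h1 | h1
  · rw [G_eq, if_pos h1]
    linarith
  · have hτc0 : 0 < τ * c := lt_of_lt_of_le (towerE_pos _) h1.le
    have hiτc : 0 ≤ iterLog (M + 1) (τ * c) := iterLog_nonneg M h1.le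
    rw [G_eq, if_neg (not_le.mpr h1)]
    rcases le_or_gt c C with hc2 | hc2
    · -- small c: bound by b
      have hτcT : τ * c ≤ T := by
        have : τ * c ≤ τ * C := by
          exact mul_le_mul_of_nonneg_left hc2 hτ.le
        exact le_trans this (le_max_left _ _)
      have hmono : iterLog (M + 1) (τ * c) ≤ iterLog (M + 1) T :=
        iterLog_mono M h1.le hτcT
      have : τ * c * iterLog (M + 1) (τ * c) ≤ T * iterLog (M + 1) T :=
        mul_le_mul hτcT hmono hiτc hT0.le
      linarith
    · -- large c
      have hcτ : τ ≤ c := le_trans (le_max_left _ _) hc2.le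
      have hcE : towerE (M + 1) ≤ c := le_trans (le_max_right _ _) hc2.le
      have hcM : towerE M < c := lt_of_lt_of_le (towerE_lt_succ M) hcE
      have hc0 : 0 < c := lt_of_lt_of_le (towerE_pos _) hcE
      have hsq : τ * c ≤ c ^ 2 := by nlinarith
      have hA : iterLog (M + 1) (τ * c) ≤ iterLog (M + 1) (c ^ 2) :=
        iterLog_mono M h1.le hsq
      have hB : iterLog (M + 1) (c ^ 2) ≤ 2 * iterLog (M + 1) c := iterLog_sq_le M hcE
      have hstep : τ * c * iterLog (M + 1) (τ * c) ≤ τ * c * (2 * iterLog (M + 1) c) :=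
        mul_le_mul_of_nonneg_left (le_trans hA hB) hτc0.le
      rw [G_eq, if_neg (not_le.mpr hcM)]
      have : τ * c * (2 * iterLog (M + 1) c) = 2 * τ * (c * iterLog (M + 1) c) := by ring
      linarith [this ▸ hstep]
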